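/- Let X₁, X₂, … be i.i.d. random variables taking each of the values −2, −1, 1, 2 with probability 1/4, and let S_t be the associated random walk. Then the expected number of crossings of level 1 satisfies E L_1 = 1/2. -/

import Mathlib

open MeasureTheory ProbabilityTheory Filter

noncomputable section

variable {Ω : Type*} [MeasurableSpace Ω]

/-- Conditional expectation of `f` given the event `A`. -/
def cexp (μ : Measure Ω) (A : Set Ω) (f : Ω → ℝ) : ℝ :=
  (∫ ω in A, f ω ∂μ) / (μ A).toReal

/-- Partial sums of the steps: `pS X t = X 0 + ⋯ + X (t-1)`, i.e. the walk `S_t`, where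
`X i` stands for the step `X_{i+1}` of the paper. -/
def pS (X : ℕ → Ω → ℝ) : ℕ → Ω → ℝ
  | 0 => fun _ => 0
  | (t + 1) => fun ω => pS X t ω + X t ω

/-- The stopping time `τ`: the first time `t > 1` with `S_t ≤ 0` if `X₁ > 0`, and `1`
otherwise. -/
def tauRW (X : ℕ → Ω → ℝ) (ω : Ω) : ℕ∞ :=
  if 0 < X 0 ω then sInf {n : ℕ∞ | ∃ t : ℕ, n = (t : ℕ∞) ∧ 1 < t ∧ pS X t ω ≤ 0}
  else 1

/-- The number of level-crossings `L_α`: the number of `t ∈ {1, …, τ}` with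
`S_{t-1} < α` and `S_t ≥ α`. -/
def nCross (X : ℕ → Ω → ℝ) (α : ℝ) (ω : Ω) : ℕ :=
  Set.ncard {t : ℕ | 1 ≤ t ∧ (t : ℕ∞) ≤ tauRW X ω ∧ pS X (t - 1) ω < α ∧ α ≤ pS X t ω}

/-- The expected number of level-crossings `E L_α`. -/
def EL (μ : Measure Ω) (X : ℕ → Ω → ℝ) (α : ℝ) : ℝ :=
  ∫ ω, (nCross X α ω : ℝ) ∂μ

/-- The value `S_τ` of the walk at the stopping time (junk value `0` if `τ = ∞`). -/
def Stau (X : ℕ → Ω → ℝ) (ω : Ω) : ℝ :=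
  pS X (tauRW X ω).toNat ω

/-- The pair `(t_i(α), τ_i(α))` of the `i`-th crossing time and the `i`-th descent time
(junk values given by `sInf ∅ = 0` when they do not exist). -/
def cdTimes (X : ℕ → Ω → ℝ) (α : ℝ) : ℕ → Ω → ℕ × ℕ
  | 0 => fun _ => (0, 0)
  | (i + 1) => fun ω =>
      let t := sInf {t : ℕ | (cdTimes X α i ω).2 < t ∧ (t : ℕ∞) ≤ tauRW X ω ∧ α ≤ pS X t ω}
      (t, sInf {s : ℕ | t < s ∧ pS X s ω < α})

/-- The event `𝔄_i(α)`: the `i`-th crossing of the level `α` occurs during `[0, τ]`. -/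
def crossEv (X : ℕ → Ω → ℝ) (α : ℝ) : ℕ → Set Ω
  | 0 => Set.univ
  | (i + 1) => crossEv X α i ∩
      {ω | ∃ t : ℕ, (cdTimes X α i ω).2 < t ∧ (t : ℕ∞) ≤ tauRW X ω ∧ α ≤ pS X t ω}

/-- Assumption 1 of the paper at the level `α`: `P(𝔄₂(α)) > 0`,
`E[S_{t₁(α)-1} ∣ 𝔄₁(α)] > 0`, `E[S_{τ₁(α)} ∣ 𝔄₁(α)] > 0`,
`E[S_{t₂(α)-1} ∣ 𝔄₂(α)] = E[S_{t₁(α)-1} ∣ 𝔄₁(α)]` and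
`E[S_{τ₂(α)} ∣ 𝔄₂(α)] = E[S_{τ₁(α)} ∣ 𝔄₁(α)]`. -/
def Assumption1 (μ : Measure Ω) (X : ℕ → Ω → ℝ) (α : ℝ) : Prop :=
  0 < μ (crossEv X α 2) ∧
  0 < cexp μ (crossEv X α 1) (fun ω => pS X ((cdTimes X α 1 ω).1 - 1) ω) ∧
  0 < cexp μ (crossEv X α 1) (fun ω => pS X ((cdTimes X α 1 ω).2) ω) ∧
  cexp μ (crossEv X α 2) (fun ω => pS X ((cdTimes X α 2 ω).1 - 1) ω)
    = cexp μ (crossEv X α 1) (fun ω => pS X ((cdTimes X α 1 ω).1 - 1) ω) ∧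
  cexp μ (crossEv X α 2) (fun ω => pS X ((cdTimes X α 2 ω).2) ω)
    = cexp μ (crossEv X α 1) (fun ω => pS X ((cdTimes X α 1 ω).2) ω)

lemma pS_int (X : ℕ → Ω → ℝ) (ω : Ω)
    (hE : ∀ i, X i ω ∈ ({-2, -1, 1, 2} : Set ℝ)) (t : ℕ) :
    ∃ k : ℤ, pS X t ω = k := by
  induction t with
  | zero => exact ⟨0, by simp [pS]⟩
  | succ n ih =>
    obtain ⟨k, hk⟩ := ih
    have h := hE n
    simp only [Set.mem_insert_iff, Set.mem_singleton_iff] at h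
    have hpS : pS X (n + 1) ω = pS X n ω + X n ω := rfl
    rcases h with h | h | h | h
    · exact ⟨k - 2, by rw [hpS, hk, h]; push_cast; ring⟩
    · exact ⟨k - 1, by rw [hpS, hk, h]; push_cast; ring⟩
    · exact ⟨k + 1, by rw [hpS, hk, h]; push_cast; ring⟩
    · exact ⟨k + 2, by rw [hpS, hk, h]; push_cast; ring⟩

lemma tauRW_one_le (X : ℕ → Ω → ℝ) (ω : Ω) : (1 : ℕ∞) ≤ tauRW X ω := by
  unfold tauRW
  split
  · refine le_sInf ?_
    rintro n ⟨t, rfl, ht, -⟩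
    exact_mod_cast ht.le
  · exact le_refl 1

lemma nCross_eq (X : ℕ → Ω → ℝ) (ω : Ω)
    (hE : ∀ i, X i ω ∈ ({-2, -1, 1, 2} : Set ℝ)) :
    nCross X 1 ω = if 1 ≤ X 0 ω then 1 else 0 := by
  have hS0 : pS X 0 ω = 0 := rfl
  have hS1 : pS X 1 ω = X 0 ω := by
    show pS X 0 ω + X 0 ω = X 0 ω
    rw [hS0]; ring
  by_cases h : 1 ≤ X 0 ω
  · have hpos : 0 < X 0 ω := lt_of_lt_of_le one_pos h
    have hτ : tauRW X ω
        = sInf {n : ℕ∞ | ∃ t : ℕ, n = (t : ℕ∞) ∧ 1 < t ∧ pS X t ω ≤ 0} := by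
      unfold tauRW; rw [if_pos hpos]
    have hset : {t : ℕ | 1 ≤ t ∧ (t : ℕ∞) ≤ tauRW X ω ∧ pS X (t - 1) ω < 1
        ∧ 1 ≤ pS X t ω} = {1} := by
      ext t
      simp only [Set.mem_setOf_eq, Set.mem_singleton_iff]
      constructor
      · rintro ⟨ht1, htτ, hlt, -⟩
        by_contra hne
        have ht2 : 2 ≤ t := by omega
        have hge1 : 1 ≤ pS X (t - 1) ω := by
          rcases eq_or_lt_of_le ht2 with h2 | h3
          · have : t - 1 = 1 := by omega
            rw [this, hS1]; exact h
          · -- t ≥ 3, so s := t - 1 satisfies 1 < s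
            set s := t - 1 with hs
            have hs1 : 1 < s := by omega
            have hSpos : 0 < pS X s ω := by
              by_contra hle
              push_neg at hle
              have hmem : (s : ℕ∞) ∈ {n : ℕ∞ | ∃ u : ℕ, n = (u : ℕ∞) ∧ 1 < u
                  ∧ pS X u ω ≤ 0} := ⟨s, rfl, hs1, hle⟩
              have h1 : tauRW X ω ≤ (s : ℕ∞) := hτ ▸ sInf_le hmem
              have h2 : (t : ℕ∞) ≤ (s : ℕ∞) := le_trans htτ h1
              have : t ≤ s := by exact_mod_cast h2
              omega
            obtain ⟨k, hk⟩ := pS_int X ω hE s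
            rw [hk] at hSpos ⊢
            have : (0 : ℤ) < k := by exact_mod_cast hSpos
            exact_mod_cast this
        linarith
      · rintro rfl
        refine ⟨le_refl 1, tauRW_one_le X ω, ?_, ?_⟩
        · rw [show (1 : ℕ) - 1 = 0 from rfl, hS0]; norm_num
        · rw [hS1]; exact h
    rw [if_pos h]
    unfold nCross
    rw [hset, Set.ncard_singleton]
  · have hneg : ¬ 0 < X 0 ω := by
      have h0 := hE 0
      simp only [Set.mem_insert_iff, Set.mem_singleton_iff] at h0
      rcases h0 with h0 | h0 | h0 | h0
      · rw [h0]; norm_num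
      · rw [h0]; norm_num
      · exact absurd (by rw [h0] : (1:ℝ) ≤ X 0 ω) h
      · exact absurd (by rw [h0]; norm_num : (1:ℝ) ≤ X 0 ω) h
    have hτ : tauRW X ω = 1 := by unfold tauRW; rw [if_neg hneg]
    have hset : {t : ℕ | 1 ≤ t ∧ (t : ℕ∞) ≤ tauRW X ω ∧ pS X (t - 1) ω < 1
        ∧ 1 ≤ pS X t ω} = ∅ := by
      ext t
      simp only [Set.mem_setOf_eq, Set.mem_empty_iff_false, iff_false, not_and]
      rintro ht1 htτ hlt
      rw [hτ] at htτ
      have : t ≤ 1 := by exact_mod_cast htτ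
      have : t = 1 := by omega
      subst this
      rw [hS1]
      intro hc
      exact h hc
    rw [if_neg h]
    unfold nCross
    rw [hset, Set.ncard_empty]

/-- For the purely symmetric random walk whose step takes each of the
values `-2, -1, 1, 2` with probability `1/4`, one has `E L_1 = 1/2`. -/
theorem stmt12 (μ : Measure Ω) [IsProbabilityMeasure μ]
    (X : ℕ → Ω → ℝ) (hmeas : ∀ i, Measurable (X i))
    (hindep : iIndepFun X μ)
    (hident : ∀ i, IdentDistrib (X i) (X 0) μ μ)
    (h1 : μ {ω | X 0 ω = -2} = 1 / 4) (h2 : μ {ω | X 0 ω = -1} = 1 / 4)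
    (h3 : μ {ω | X 0 ω = 1} = 1 / 4) (h4 : μ {ω | X 0 ω = 2} = 1 / 4) :
    EL μ X 1 = 1 / 2 := by
  classical
  set s4 : Set ℝ := {-2, -1, 1, 2} with hs4
  have hs4m : MeasurableSet s4 := (Set.toFinite s4).measurableSet
  -- the four atoms as preimages
  have hpre : ∀ c : ℝ, {ω | X 0 ω = c} = X 0 ⁻¹' {c} := fun c => rfl
  have hm : ∀ c : ℝ, MeasurableSet (X 0 ⁻¹' {c}) :=
    fun c => (hmeas 0) (measurableSet_singleton c)
  have hdisj : ∀ c d : ℝ, c ≠ d → Disjoint (X 0 ⁻¹' {c}) (X 0 ⁻¹' {d}) := by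
    intro c d hcd
    rw [Set.disjoint_left]
    rintro ω h1 h2
    exact hcd (h1.symm.trans h2)
  have hCD : μ (X 0 ⁻¹' ({1, 2} : Set ℝ)) = 1 / 2 := by
    have : (X 0 ⁻¹' ({1, 2} : Set ℝ)) = X 0 ⁻¹' {1} ∪ X 0 ⁻¹' {2} := by
      rw [← Set.preimage_union]; rfl
    rw [this, measure_union (hdisj 1 2 (by norm_num)) (hm 2), ← hpre, ← hpre, h3, h4]
    rw [ENNReal.div_add_div_same]
    rw [ENNReal.div_eq_div_iff (by norm_num) (by norm_num) (by norm_num) (by norm_num)]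
    norm_num
  have hAB : μ (X 0 ⁻¹' ({-2, -1} : Set ℝ)) = 1 / 2 := by
    have : (X 0 ⁻¹' ({-2, -1} : Set ℝ)) = X 0 ⁻¹' {-2} ∪ X 0 ⁻¹' {-1} := by
      rw [← Set.preimage_union]; rfl
    rw [this, measure_union (hdisj (-2) (-1) (by norm_num)) (hm (-1)), ← hpre, ← hpre,
      h1, h2]
    rw [ENNReal.div_add_div_same]
    rw [ENNReal.div_eq_div_iff (by norm_num) (by norm_num) (by norm_num) (by norm_num)]
    norm_num
  have hs4split : X 0 ⁻¹' s4 = X 0 ⁻¹' ({-2, -1} : Set ℝ) ∪ X 0 ⁻¹' ({1, 2} : Set ℝ) := by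
    have hsets : s4 = ({-2, -1} : Set ℝ) ∪ ({1, 2} : Set ℝ) := by
      ext x
      simp only [hs4, Set.mem_insert_iff, Set.mem_singleton_iff, Set.mem_union]
      tauto
    rw [hsets, Set.preimage_union]
  have hdisjAB_CD : Disjoint (X 0 ⁻¹' ({-2, -1} : Set ℝ)) (X 0 ⁻¹' ({1, 2} : Set ℝ)) := by
    rw [Set.disjoint_left]
    rintro ω hω1 hω2
    simp only [Set.mem_preimage, Set.mem_insert_iff, Set.mem_singleton_iff] at hω1 hω2
    rcases hω1 with h | h <;> rcases hω2 with h' | h' <;> rw [h] at h' <;> norm_num at h'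
  have hmCD : MeasurableSet (X 0 ⁻¹' ({1, 2} : Set ℝ)) :=
    (hmeas 0) ((Set.toFinite _).measurableSet)
  have hs4full : μ (X 0 ⁻¹' s4) = 1 := by
    rw [hs4split, measure_union hdisjAB_CD hmCD, hAB, hCD]
    rw [ENNReal.div_add_div_same, ENNReal.div_eq_one_iff (by norm_num) (by norm_num)]
    norm_num
  -- each step lies in s4 almost surely
  have hae : ∀ᵐ ω ∂μ, ∀ i, X i ω ∈ s4 := by
    rw [ae_all_iff]
    intro i
    have hmi : MeasurableSet (X i ⁻¹' s4) := (hmeas i) hs4m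
    have hfull : μ (X i ⁻¹' s4) = 1 := by
      rw [(hident i).measure_mem_eq hs4m]
      exact hs4full
    have : μ (X i ⁻¹' s4)ᶜ = 0 := by
      rw [measure_compl hmi (measure_ne_top μ _), hfull, measure_univ, tsub_self]
    exact this
  -- the crossings count is a.e. the indicator of {X 0 ∈ {1, 2}}
  have hcong : (fun ω => (nCross X 1 ω : ℝ))
      =ᵐ[μ] (X 0 ⁻¹' ({1, 2} : Set ℝ)).indicator (fun _ => (1 : ℝ)) := by
    filter_upwards [hae] with ω hω
    rw [nCross_eq X ω hω]
    by_cases hc : ω ∈ X 0 ⁻¹' ({1, 2} : Set ℝ)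
    · have h1le : 1 ≤ X 0 ω := by
        simp only [Set.mem_preimage, Set.mem_insert_iff, Set.mem_singleton_iff] at hc
        rcases hc with h | h <;> rw [h] <;> norm_num
      rw [if_pos h1le, Set.indicator_of_mem hc]
      norm_num
    · have h1le : ¬ 1 ≤ X 0 ω := by
        have h0 := hω 0
        simp only [hs4, Set.mem_insert_iff, Set.mem_singleton_iff] at h0
        simp only [Set.mem_preimage, Set.mem_insert_iff, Set.mem_singleton_iff] at hc
        push_neg at hc
        rcases h0 with h | h | h | h
        · rw [h]; norm_num
        · rw [h]; norm_num
        · exact absurd h hc.1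
        · exact absurd h hc.2
      rw [if_neg h1le, Set.indicator_of_notMem hc]
      norm_num
  unfold EL
  rw [integral_congr_ae hcong]
  have : ∫ ω, (X 0 ⁻¹' ({1, 2} : Set ℝ)).indicator (fun _ => (1 : ℝ)) ω ∂μ
      = (μ (X 0 ⁻¹' ({1, 2} : Set ℝ))).toReal := by
    rw [integral_indicator hmCD]
    simp
    rfl
  rw [this, hCD]
  rw [ENNReal.toReal_div]
  norm_num

end
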